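/- Let b = p/q with p an integer, q ≥ 2 a positive integer, and gcd(|p|,q) = 1. Let λ be a real number such that there exists at least one pair (n,k) ∈ ℕ×ℤ with 4n|k − p/q| = λ. Then m := qλ/4 is a positive integer, and the number of pairs (n,k) ∈ ℕ×ℤ with 4n|k − p/q| = λ is at most 2·d(m), where d(m) denotes the number of positive divisors of m. -/

import Mathlib

open Real

/-- For rational Aharonov–Bohm flux `b = p/q` (in lowest terms, `q ≥ 2`), any
eigenvalue `λ = 4n|k − p/q|` of the magnetic Laplacian on the Grushin cylinder
is such that `m = qλ/4` is a positive integer, and its multiplicity (the number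
of pairs `(n,k)` with `4n|k − p/q| = λ`) is at most `2·d(m)`. -/
theorem grushin_cylinder_ab_rational_degeneracy
    (p : ℤ) (q : ℕ) (hq : 2 ≤ q) (hpq : Nat.gcd p.natAbs q = 1)
    (lam : ℝ)
    (hlam : ∃ n : ℕ, ∃ k : ℤ, 0 < n ∧ 4 * n * |(k : ℝ) - (p : ℝ) / q| = lam) :
    ∃ m : ℕ, 0 < m ∧ (m : ℝ) = (q : ℝ) * lam / 4 ∧
      Set.ncard {P : ℕ × ℤ | 0 < P.1 ∧ 4 * P.1 * |(P.2 : ℝ) - (p : ℝ) / q| = lam}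
        ≤ 2 * m.divisors.card := by
  obtain ⟨n₀, k₀, hn₀, heq₀⟩ := hlam
  have hq0 : (0:ℝ) < q := by positivity
  -- the key real identity: any solution gives the same integer q·λ/4
  have key : ∀ n : ℕ, ∀ k : ℤ, 4 * n * |(k : ℝ) - (p : ℝ) / q| = lam →
      ((n * (k * q - p).natAbs : ℕ) : ℝ) = (q : ℝ) * lam / 4 := by
    intro n k h
    have hcast : ((k * q - p : ℤ) : ℝ) = ((k:ℝ) - (p:ℝ)/q) * q := by
      push_cast; field_simp
    have habs : |(k : ℝ) - (p : ℝ) / q| = |((k * q - p : ℤ) : ℝ)| / q := by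
      rw [hcast, abs_mul, abs_of_pos hq0, mul_div_cancel_right₀ _ hq0.ne']
    rw [habs] at h
    push_cast [Nat.cast_natAbs]
    field_simp at h ⊢
    push_cast at h
    rw [mul_comm (q:ℝ) (k:ℝ)]
    linarith
  have hkq : ∀ k : ℤ, k * q - p ≠ 0 := by
    intro k hk
    have hkp := sub_eq_zero.mp hk
    have hdvd : (q:ℤ) ∣ p := ⟨k, by rw [← hkp]; ring⟩
    have hqp : q ∣ p.natAbs := by
      have := Int.natAbs_dvd_natAbs.mpr hdvd
      simpa using this
    have : q ∣ 1 := hpq ▸ Nat.dvd_gcd hqp dvd_rfl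
    have := Nat.le_of_dvd one_pos this
    omega
  set m : ℕ := n₀ * (k₀ * q - p).natAbs with hmdef
  have hm : (m : ℝ) = (q : ℝ) * lam / 4 := key n₀ k₀ heq₀
  have hmpos : 0 < m := by
    have := hkq k₀
    have : (k₀ * q - p).natAbs ≠ 0 := Int.natAbs_ne_zero.mpr this
    positivity
  refine ⟨m, hmpos, hm, ?_⟩
  -- every solution (n,k) satisfies n * |kq - p| = m
  have hsol : ∀ n : ℕ, ∀ k : ℤ, 4 * n * |(k : ℝ) - (p : ℝ) / q| = lam →
      n * (k * q - p).natAbs = m := by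
    intro n k h
    have := (key n k h).trans hm.symm
    exact_mod_cast this
  set S := {P : ℕ × ℤ | 0 < P.1 ∧ 4 * P.1 * |(P.2 : ℝ) - (p : ℝ) / q| = lam} with hS
  set f : ℕ × ℤ → ℕ × Bool := fun P => (P.1, decide (0 ≤ P.2 * q - p)) with hf
  set T : Finset (ℕ × Bool) := m.divisors ×ˢ Finset.univ with hT
  have hinj : Set.InjOn f S := by
    rintro ⟨n, k⟩ ⟨hn, hk⟩ ⟨n', k'⟩ ⟨hn', hk'⟩ hfe
    simp only [hf, Prod.mk.injEq] at hfe
    obtain ⟨h1, h2⟩ := hfe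
    subst h1
    have e1 := hsol n k hk
    have e2 := hsol n k' hk'
    have habs : (k * q - p).natAbs = (k' * q - p).natAbs :=
      Nat.eq_of_mul_eq_mul_left hn (e1.trans e2.symm)
    have h2' : (0 ≤ k * q - p) ↔ (0 ≤ k' * q - p) := by
      rw [← decide_eq_decide]; exact h2
    have heq : k * q - p = k' * q - p := by
      rcases le_or_gt 0 (k * q - p) with hcase | hcase
      · have := h2'.mp hcase; omega
      · have : ¬ (0 ≤ k' * (q:ℤ) - p) := fun hh => absurd (h2'.mpr hh) (not_le.mpr hcase)
        omega
    have : k * (q:ℤ) = k' * q := by omega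
    have hq' : (q:ℤ) ≠ 0 := by exact_mod_cast (by omega : q ≠ 0)
    have : k = k' := mul_right_cancel₀ hq' this
    simp [this]
  have hsub : f '' S ⊆ ↑T := by
    rintro _ ⟨⟨n, k⟩, ⟨hn, hk⟩, rfl⟩
    have e := hsol n k hk
    simp only [hT, Finset.coe_product, Set.mem_prod, Finset.mem_coe,
      Nat.mem_divisors, hf]
    exact ⟨⟨⟨_, e.symm⟩, hmpos.ne'⟩, Finset.mem_univ _⟩
  calc S.ncard = (f '' S).ncard := (Set.ncard_image_of_injOn hinj).symm
    _ ≤ (↑T : Set (ℕ × Bool)).ncard := Set.ncard_le_ncard hsub T.finite_toSet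
    _ = T.card := Set.ncard_coe_finset T
    _ = 2 * m.divisors.card := by simp [hT, Finset.card_product, mul_comm]
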